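/- Let L be a differential graded Lie algebra and for j,k ≥ 0 with j + k < n define Z_{n,j,k} = ∑_{π ∈ S_{n+1}} (-1)^{ε + |a_{π_1}| + ... + |a_{π_j}|} [...[[...[Da_{π_0}, a_{π_2}],...,a_{π_j}], [...[Da_{π_{j+1}}, a_{π_{j+2}}],...,a_{π_{j+k+1}}]],...,a_{π_n}], for fixed homogeneous elements a_0,...,a_n and D equal to δ on degree 1 and zero elsewhere. Then Z_{n,j,k} = Z_{n,k,j}. -/

import Mathlib

section

open Finset

variable {V : Type*} [AddCommGroup V] [Module ℚ V]

/-- The Koszul sign of a permutation `σ` of `n+1` graded elements with degrees `d`: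
the product over inversions `p < q`, `σ p > σ q` of `(-1)^{|a_{σ p}||a_{σ q}|}`. -/
noncomputable def koszulSgn (n : ℕ) (d : Fin (n + 1) → ℤ)
    (σ : Equiv.Perm (Fin (n + 1))) : ℚ :=
  ∏ pq ∈ Finset.univ.filter
      (fun pq : Fin (n + 1) × Fin (n + 1) => pq.1 < pq.2 ∧ σ pq.2 < σ pq.1),
    (-1 : ℚ) ^ (d (σ pq.1) * d (σ pq.2))

/-- The iterated left bracket `[…[[x, g lo], g (lo+1)], …, g (lo+len-1)]`. -/
def iterBr (br : V →ₗ[ℚ] V →ₗ[ℚ] V) (x : V) (g : ℕ → V) (lo len : ℕ) : V :=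
  ((List.range' lo len).map g).foldl (fun y z => br y z) x

open Fin.NatCast in
/-- Getzler's expression `Z_{n,j,k}`: the sum over `π ∈ S_{n+1}` with Koszul signs and
the extra sign `(-1)^{|a_{π_1}|+⋯+|a_{π_j}|}` of the iterated bracket
`[…[[…[Da_{π_0},a_{π_1}],…,a_{π_j}], […[Da_{π_{j+1}},a_{π_{j+2}}],…,a_{π_{j+k+1}}]],…,a_{π_n}]`,
where `D` is `δ` in degree `1` and `0` elsewhere. -/
noncomputable def Zval (br : V →ₗ[ℚ] V →ₗ[ℚ] V) (δ : V →ₗ[ℚ] V)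
    (n : ℕ) (d : Fin (n + 1) → ℤ) (a : Fin (n + 1) → V) (j k : ℕ) : V :=
  ∑ σ : Equiv.Perm (Fin (n + 1)),
    (koszulSgn n d σ *
        (-1 : ℚ) ^ (∑ m ∈ Finset.Icc 1 j, d (σ (m : Fin (n + 1))))) •
      iterBr br
        (br (iterBr br (if d (σ 0) = 1 then δ (a (σ 0)) else 0)
                (fun m => a (σ (m : Fin (n + 1)))) 1 j)
            (iterBr br
              (if d (σ ((j + 1 : ℕ) : Fin (n + 1))) = 1
                then δ (a (σ ((j + 1 : ℕ) : Fin (n + 1)))) else 0)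
              (fun m => a (σ (m : Fin (n + 1)))) (j + 2) k))
        (fun m => a (σ (m : Fin (n + 1)))) (j + k + 2) (n - (j + k + 1))

/-! ### Auxiliary sign lemmas -/

open Fin.NatCast

lemma neg_one_zpow_congr {m m' : ℤ} (h : (m : ZMod 2) = (m' : ZMod 2)) :
    (-1:ℚ)^m = (-1:ℚ)^m' := by
  have key : ∀ z : ℤ, (-1:ℚ)^z = if (z : ZMod 2) = 0 then 1 else -1 := by
    intro z
    rcases Int.even_or_odd z with hz | hz
    · rw [Even.neg_one_zpow hz, if_pos]
      rw [ZMod.intCast_zmod_eq_zero_iff_dvd]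
      exact_mod_cast hz.two_dvd
    · rw [Odd.neg_one_zpow hz, if_neg]
      rw [ZMod.intCast_zmod_eq_zero_iff_dvd]
      intro h2
      have := even_iff_two_dvd.2 (by exact_mod_cast h2)
      exact (Int.not_even_iff_odd.2 hz) this
  rw [key, key, h]

lemma neg_one_zpow_sum {ι : Type*} (f : ι → ℤ) (s : Finset ι) :
    (-1:ℚ)^(∑ i ∈ s, f i) = ∏ i ∈ s, (-1:ℚ)^(f i) := by
  induction s using Finset.cons_induction with
  | empty => simp
  | cons i s his ih =>
    rw [Finset.sum_cons, Finset.prod_cons, zpow_add₀ (by norm_num : (-1:ℚ) ≠ 0), ih]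

/-- The integer exponent whose parity is the Koszul sign. -/
def Fexp (n : ℕ) (d : Fin (n + 1) → ℤ) (σ : Equiv.Perm (Fin (n + 1))) : ℤ :=
  ∑ pq ∈ Finset.univ.filter
      (fun pq : Fin (n + 1) × Fin (n + 1) => pq.1 < pq.2 ∧ σ pq.2 < σ pq.1),
    d (σ pq.1) * d (σ pq.2)

lemma koszulSgn_eq_zpow (n : ℕ) (d : Fin (n + 1) → ℤ) (σ : Equiv.Perm (Fin (n + 1))) :
    koszulSgn n d σ = (-1:ℚ) ^ Fexp n d σ := (neg_one_zpow_sum _ _).symm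

def pairSet (n : ℕ) : Finset (Fin (n + 1) × Fin (n + 1)) :=
  Finset.univ.filter (fun pq => pq.1 < pq.2)

lemma Fexp_eq_sum_ite (n : ℕ) (d : Fin (n + 1) → ℤ) (ρ : Equiv.Perm (Fin (n + 1))) :
    Fexp n d ρ = ∑ pq ∈ pairSet n,
      if ρ pq.2 < ρ pq.1 then d (ρ pq.1) * d (ρ pq.2) else 0 := by
  rw [Fexp, pairSet, ← Finset.filter_filter, Finset.sum_filter]

/-- The Koszul sign cocycle identity (mod 2). -/
lemma Fexp_mul (n : ℕ) (d : Fin (n + 1) → ℤ) (σ τ : Equiv.Perm (Fin (n + 1))) :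
    ((Fexp n d (σ * τ) : ZMod 2)) =
      ((Fexp n d σ : ZMod 2) + (Fexp n (fun p => d (σ p)) τ : ZMod 2)) := by
  have hσ : Fexp n d σ = ∑ pq ∈ pairSet n,
      (if τ pq.1 < τ pq.2 then
        (if σ (τ pq.2) < σ (τ pq.1) then d (σ (τ pq.1)) * d (σ (τ pq.2)) else 0)
      else
        (if σ (τ pq.1) < σ (τ pq.2) then d (σ (τ pq.2)) * d (σ (τ pq.1)) else 0)) := by
    rw [Fexp_eq_sum_ite]
    refine Finset.sum_nbij' (i := fun pq =>
        if τ⁻¹ pq.1 < τ⁻¹ pq.2 then (τ⁻¹ pq.1, τ⁻¹ pq.2) else (τ⁻¹ pq.2, τ⁻¹ pq.1))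
      (j := fun pq => if τ pq.1 < τ pq.2 then (τ pq.1, τ pq.2) else (τ pq.2, τ pq.1))
      ?_ ?_ ?_ ?_ ?_
    · intro pq hpq
      simp only [pairSet, Finset.mem_filter, Finset.mem_univ, true_and] at hpq ⊢
      split_ifs with h
      · exact h
      · rcases lt_trichotomy (τ⁻¹ pq.1) (τ⁻¹ pq.2) with h1 | h1 | h1
        · exact absurd h1 h
        · exact absurd (τ⁻¹.injective h1) (ne_of_lt hpq)
        · exact h1
    · intro pq hpq
      simp only [pairSet, Finset.mem_filter, Finset.mem_univ, true_and] at hpq ⊢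
      split_ifs with h
      · exact h
      · rcases lt_trichotomy (τ pq.1) (τ pq.2) with h1 | h1 | h1
        · exact absurd h1 h
        · exact absurd (τ.injective h1) (ne_of_lt hpq)
        · exact h1
    · intro pq hpq
      simp only [pairSet, Finset.mem_filter, Finset.mem_univ, true_and] at hpq
      by_cases h : τ⁻¹ pq.1 < τ⁻¹ pq.2
      · simp only [Equiv.Perm.coe_inv] at h; simp [h, Equiv.apply_symm_apply, hpq]
      · simp only [Equiv.Perm.coe_inv] at h; simp [h, Equiv.apply_symm_apply, not_lt.2 hpq.le]
    · intro pq hpq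
      simp only [pairSet, Finset.mem_filter, Finset.mem_univ, true_and] at hpq
      by_cases h : τ pq.1 < τ pq.2
      · simp [h, Equiv.symm_apply_apply, hpq]
      · simp [h, Equiv.symm_apply_apply, not_lt.2 hpq.le]
    · intro pq hpq
      simp only [pairSet, Finset.mem_filter, Finset.mem_univ, true_and] at hpq
      by_cases h : τ⁻¹ pq.1 < τ⁻¹ pq.2
      · simp only [Equiv.Perm.coe_inv] at h; simp [h, Equiv.apply_symm_apply, hpq]
      · simp only [Equiv.Perm.coe_inv] at h; simp [h, Equiv.apply_symm_apply, not_lt.2 hpq.le]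
  have hτ : Fexp n (fun p => d (σ p)) τ = ∑ pq ∈ pairSet n,
      if τ pq.2 < τ pq.1 then d (σ (τ pq.1)) * d (σ (τ pq.2)) else 0 :=
    Fexp_eq_sum_ite n _ τ
  have hστ : Fexp n d (σ * τ) = ∑ pq ∈ pairSet n,
      if σ (τ pq.2) < σ (τ pq.1) then d (σ (τ pq.1)) * d (σ (τ pq.2)) else 0 := by
    rw [Fexp_eq_sum_ite]; rfl
  rw [hσ, hτ, hστ]
  push_cast
  rw [← Finset.sum_add_distrib]
  refine Finset.sum_congr rfl ?_
  intro pq hpq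
  simp only [pairSet, Finset.mem_filter, Finset.mem_univ, true_and] at hpq
  have hne : τ pq.1 ≠ τ pq.2 := fun h => (ne_of_lt hpq) (τ.injective h)
  have hne2 : σ (τ pq.1) ≠ σ (τ pq.2) := fun h => hne (σ.injective h)
  by_cases h : τ pq.1 < τ pq.2
  · have h' : ¬ τ pq.2 < τ pq.1 := not_lt.2 h.le
    simp [h, h', apply_ite (Int.cast : ℤ → ZMod 2)]
  · have h' : τ pq.2 < τ pq.1 := (lt_or_gt_of_ne hne).resolve_left h
    rcases lt_or_gt_of_ne hne2 with h2 | h2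
    · have h2' : ¬ σ (τ pq.2) < σ (τ pq.1) := not_lt.2 h2.le
      simp only [if_neg h2', if_pos h2, if_pos h', if_neg h, Int.cast_zero,
        Int.cast_mul]
      rw [mul_comm ((d (σ (τ pq.2)) : ZMod 2))]
      exact (CharTwo.add_self_eq_zero _).symm
    · have h2' : ¬ σ (τ pq.1) < σ (τ pq.2) := not_lt.2 h2.le
      simp [h, h', h2, h2', apply_ite (Int.cast : ℤ → ZMod 2)]

/-! ### The block swap permutation -/

def swapFun (j k : ℕ) (m : ℕ) : ℕ :=
  if m ≤ k then m + (j+1) else if m ≤ j + k + 1 then m - (k+1) else m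

lemma swapFun_lt {n j k : ℕ} (h : j + k + 1 ≤ n) {m : ℕ} (hm : m < n+1) :
    swapFun j k m < n+1 := by
  unfold swapFun; split_ifs <;> omega

lemma swapFun_invol (j k m : ℕ) : swapFun k j (swapFun j k m) = m := by
  unfold swapFun; split_ifs <;> omega

def swapPerm (n j k : ℕ) (h : j + k + 1 ≤ n) : Equiv.Perm (Fin (n+1)) where
  toFun m := ⟨swapFun j k m.val, swapFun_lt h m.isLt⟩
  invFun m := ⟨swapFun k j m.val, swapFun_lt (by omega) m.isLt⟩
  left_inv m := Fin.ext (swapFun_invol j k m.val)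
  right_inv m := Fin.ext (swapFun_invol k j m.val)

lemma swapPerm_apply {n : ℕ} (j k : ℕ) (h : j + k + 1 ≤ n) (m : ℕ) (hm : m ≤ n) :
    swapPerm n j k h ((m : ℕ) : Fin (n+1)) = ((swapFun j k m : ℕ) : Fin (n+1)) := by
  apply Fin.ext
  have h1 : ((m : ℕ) : Fin (n+1)).val = m := Fin.val_cast_of_lt (by omega)
  have h2 : ((swapFun j k m : ℕ) : Fin (n+1)).val = swapFun j k m :=
    Fin.val_cast_of_lt (swapFun_lt h (by omega))
  show swapFun j k ((m : ℕ) : Fin (n+1)).val = _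
  rw [h1, h2]

lemma swapFun_low {j k m : ℕ} (hm : m ≤ k) : swapFun j k m = j + 1 + m := by
  unfold swapFun; split_ifs <;> omega

lemma swapFun_mid {j k m : ℕ} (h1 : k + 1 ≤ m) (h2 : m ≤ j + k + 1) :
    swapFun j k m = m - (k+1) := by
  unfold swapFun; split_ifs <;> omega

lemma swapFun_high {j k m : ℕ} (h1 : j + k + 1 < m) : swapFun j k m = m := by
  unfold swapFun; split_ifs <;> omega

lemma Fexp_swap (n : ℕ) (e : Fin (n+1) → ℤ) (j k : ℕ) (h : j + k + 1 ≤ n) :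
    Fexp n e (swapPerm n j k h) =
      (∑ r ∈ Finset.range (k+1), e ((j+1+r : ℕ) : Fin (n+1))) *
        (∑ r ∈ Finset.range (j+1), e ((r : ℕ) : Fin (n+1))) := by
  set τ := swapPerm n j k h with hτ
  have hval : ∀ m : Fin (n+1), (τ m).val = swapFun j k m.val := fun m => rfl
  have hset : Finset.univ.filter
      (fun pq : Fin (n + 1) × Fin (n + 1) => pq.1 < pq.2 ∧ τ pq.2 < τ pq.1)
      = (Finset.univ.filter (fun p : Fin (n+1) => p.val ≤ k)) ×ˢ
        (Finset.univ.filter (fun q : Fin (n+1) => k+1 ≤ q.val ∧ q.val ≤ j+k+1)) := by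
    ext pq
    simp only [Finset.mem_filter, Finset.mem_univ, true_and, Finset.mem_product,
      Fin.lt_def, hval]
    have h2 := pq.2.isLt
    have h1 := pq.1.isLt
    unfold swapFun
    split_ifs <;> omega
  rw [Fexp, hset, Finset.sum_product]
  dsimp only
  rw [← Finset.sum_mul_sum]
  congr 1
  · refine Finset.sum_nbij' (i := fun p => p.val) (j := fun r => ((r : ℕ) : Fin (n+1)))
      ?_ ?_ ?_ ?_ ?_
    · intro p hp
      simp only [Finset.mem_filter, Finset.mem_univ, true_and] at hp
      simp only [Finset.mem_range]; omega
    · intro r hr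
      simp only [Finset.mem_range] at hr
      simp only [Finset.mem_filter, Finset.mem_univ, true_and]
      rw [Fin.val_cast_of_lt (by omega)]; omega
    · intro p _; exact Fin.cast_val_eq_self p
    · intro r hr
      simp only [Finset.mem_range] at hr
      rw [Fin.val_cast_of_lt (by omega)]
    · intro p hp
      simp only [Finset.mem_filter, Finset.mem_univ, true_and] at hp
      congr 1
      apply Fin.ext
      rw [hval, Fin.val_cast_of_lt (by omega), swapFun_low hp]
  · refine Finset.sum_nbij' (i := fun q => q.val - (k+1))
      (j := fun r => ((k+1+r : ℕ) : Fin (n+1))) ?_ ?_ ?_ ?_ ?_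
    · intro q hq
      simp only [Finset.mem_filter, Finset.mem_univ, true_and] at hq
      simp only [Finset.mem_range]; omega
    · intro r hr
      simp only [Finset.mem_range] at hr
      simp only [Finset.mem_filter, Finset.mem_univ, true_and]
      rw [Fin.val_cast_of_lt (by omega)]; omega
    · intro q hq
      simp only [Finset.mem_filter, Finset.mem_univ, true_and] at hq
      apply Fin.ext
      rw [Fin.val_cast_of_lt (by omega)]; omega
    · intro r hr
      simp only [Finset.mem_range] at hr
      rw [Fin.val_cast_of_lt (by omega)]; omega
    · intro q hq
      simp only [Finset.mem_filter, Finset.mem_univ, true_and] at hq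
      congr 1
      apply Fin.ext
      rw [hval, Fin.val_cast_of_lt (by omega), swapFun_mid hq.1 hq.2]

/-! ### iterBr lemmas -/

lemma iterBr_succ (br : V →ₗ[ℚ] V →ₗ[ℚ] V) (x : V) (g : ℕ → V) (lo t : ℕ) :
    iterBr br x g lo (t+1) = iterBr br (br x (g lo)) g (lo+1) t := by
  rw [iterBr, iterBr, List.range'_succ, List.map_cons, List.foldl_cons]

lemma iterBr_zero (br : V →ₗ[ℚ] V →ₗ[ℚ] V) (g : ℕ → V) (lo len : ℕ) :
    iterBr br 0 g lo len = 0 := by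
  induction len generalizing lo with
  | zero => rfl
  | succ m ih =>
    rw [iterBr_succ]
    simpa using ih (lo+1)

lemma iterBr_smul (br : V →ₗ[ℚ] V →ₗ[ℚ] V) (c : ℚ) (x : V) (g : ℕ → V) (lo len : ℕ) :
    iterBr br (c • x) g lo len = c • iterBr br x g lo len := by
  induction len generalizing lo x with
  | zero => rfl
  | succ m ih =>
    rw [iterBr_succ, iterBr_succ]
    have : br (c • x) (g lo) = c • br x (g lo) := by simp
    rw [this]
    exact ih _ (lo+1)

lemma iterBr_mem (H : ℤ → Submodule ℚ V) (br : V →ₗ[ℚ] V →ₗ[ℚ] V)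
    (hbr_mem : ∀ {i j : ℤ} {a b : V}, a ∈ H i → b ∈ H j → br a b ∈ H (i + j))
    (x : V) (g : ℕ → V) (e : ℕ → ℤ) (hg : ∀ m, g m ∈ H (e m)) {i : ℤ} (hx : x ∈ H i)
    (lo len : ℕ) :
    iterBr br x g lo len ∈ H (i + ∑ m ∈ Finset.Ico lo (lo + len), e m) := by
  induction len generalizing lo x i with
  | zero => simpa [iterBr] using hx
  | succ m ih =>
    rw [iterBr_succ]
    have h1 : br x (g lo) ∈ H (i + e lo) := hbr_mem hx (hg lo)
    have := ih (lo := lo+1) (x := br x (g lo)) (i := i + e lo) h1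
    have hs : i + e lo + ∑ m ∈ Finset.Ico (lo+1) (lo+1+m), e m
        = i + ∑ m ∈ Finset.Ico lo (lo + (m+1)), e m := by
      rw [add_assoc]
      congr 1
      rw [Finset.sum_eq_sum_Ico_succ_bot (by omega : lo < lo + (m+1)),
        show lo + (m+1) = lo + 1 + m from by omega]
    rwa [hs] at this

lemma iterBr_congr (br : V →ₗ[ℚ] V →ₗ[ℚ] V) (x : V) {f f' : ℕ → V} (lo len : ℕ)
    (hf : ∀ m, lo ≤ m → m < lo + len → f m = f' m) :
    iterBr br x f lo len = iterBr br x f' lo len := by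
  induction len generalizing lo x with
  | zero => rfl
  | succ t ih =>
    rw [iterBr_succ, iterBr_succ, hf lo le_rfl (by omega)]
    exact ih _ (lo+1) (fun m h1 h2 => hf m (by omega) (by omega))

lemma iterBr_shift (br : V →ₗ[ℚ] V →ₗ[ℚ] V) (x : V) (g : ℕ → V) (c lo len : ℕ) :
    iterBr br x (fun m => g (c + m)) lo len = iterBr br x g (c + lo) len := by
  induction len generalizing lo x with
  | zero => rfl
  | succ t ih =>
    rw [iterBr_succ, iterBr_succ]
    have := ih (br x (g (c + lo))) (lo+1)
    rwa [show c + (lo+1) = c + lo + 1 from by omega] at this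

/-! ### The per-term lemma -/

lemma term_swap (H : ℤ → Submodule ℚ V)
    (br : V →ₗ[ℚ] V →ₗ[ℚ] V) (δ : V →ₗ[ℚ] V)
    (hbr_mem : ∀ {i j : ℤ} {a b : V}, a ∈ H i → b ∈ H j → br a b ∈ H (i + j))
    (hδ_mem : ∀ {i : ℤ} {a : V}, a ∈ H i → δ a ∈ H (i - 1))
    (hanti : ∀ {i j : ℤ} {a b : V}, a ∈ H i → b ∈ H j →
      br a b = -((-1 : ℚ) ^ (i * j) • br b a))
    (n : ℕ) (d : Fin (n + 1) → ℤ) (a : Fin (n + 1) → V)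
    (ha : ∀ p, a p ∈ H (d p))
    (j k : ℕ) (h : j + k + 1 ≤ n) (σ : Equiv.Perm (Fin (n + 1))) :
    (koszulSgn n d σ *
        (-1 : ℚ) ^ (∑ m ∈ Finset.Icc 1 j, d (σ (m : Fin (n + 1))))) •
      iterBr br
        (br (iterBr br (if d (σ 0) = 1 then δ (a (σ 0)) else 0)
                (fun m => a (σ (m : Fin (n + 1)))) 1 j)
            (iterBr br
              (if d (σ ((j + 1 : ℕ) : Fin (n + 1))) = 1
                then δ (a (σ ((j + 1 : ℕ) : Fin (n + 1)))) else 0)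
              (fun m => a (σ (m : Fin (n + 1)))) (j + 2) k))
        (fun m => a (σ (m : Fin (n + 1)))) (j + k + 2) (n - (j + k + 1))
    =
    (koszulSgn n d (σ * swapPerm n j k h) *
        (-1 : ℚ) ^ (∑ m ∈ Finset.Icc 1 k, d ((σ * swapPerm n j k h) (m : Fin (n + 1))))) •
      iterBr br
        (br (iterBr br (if d ((σ * swapPerm n j k h) 0) = 1
                then δ (a ((σ * swapPerm n j k h) 0)) else 0)
                (fun m => a ((σ * swapPerm n j k h) (m : Fin (n + 1)))) 1 k)
            (iterBr br
              (if d ((σ * swapPerm n j k h) ((k + 1 : ℕ) : Fin (n + 1))) = 1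
                then δ (a ((σ * swapPerm n j k h) ((k + 1 : ℕ) : Fin (n + 1)))) else 0)
              (fun m => a ((σ * swapPerm n j k h) (m : Fin (n + 1)))) (k + 2) j))
        (fun m => a ((σ * swapPerm n j k h) (m : Fin (n + 1)))) (k + j + 2) (n - (k + j + 1)) := by
  set τ := swapPerm n j k h with hτdef
  have happ : ∀ m : ℕ, m ≤ n →
      (σ * τ) ((m : ℕ) : Fin (n+1)) = σ (((swapFun j k m : ℕ)) : Fin (n+1)) := by
    intro m hm
    rw [Equiv.Perm.mul_apply, hτdef, swapPerm_apply j k h m hm]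
  have h0 : (σ * τ) (0 : Fin (n+1)) = σ ((j + 1 : ℕ) : Fin (n+1)) := by
    have := happ 0 (by omega)
    rw [Nat.cast_zero] at this
    rw [this, show swapFun j k 0 = j + 1 from by rw [swapFun_low (Nat.zero_le k)]]
  have hk1 : (σ * τ) ((k + 1 : ℕ) : Fin (n+1)) = σ 0 := by
    rw [happ (k+1) (by omega),
      show swapFun j k (k+1) = 0 from by rw [swapFun_mid le_rfl (by omega)]; omega,
      Nat.cast_zero]
  -- the three iterated bracket rewrites
  have inner1 : ∀ w : V,
      iterBr br w (fun m => a ((σ * τ) (m : Fin (n+1)))) 1 k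
        = iterBr br w (fun m => a (σ (m : Fin (n+1)))) (j + 2) k := by
    intro w
    have hc : iterBr br w (fun m => a (σ ((j + 1 + m : ℕ) : Fin (n+1)))) 1 k
        = iterBr br w (fun t => a (σ ((t : ℕ) : Fin (n+1)))) (j + 1 + 1) k :=
      iterBr_shift br w (fun t => a (σ ((t : ℕ) : Fin (n+1)))) (j+1) 1 k
    rw [show j + 1 + 1 = j + 2 from by omega] at hc
    exact (iterBr_congr br w (f' := fun m => a (σ ((j + 1 + m : ℕ) : Fin (n+1)))) 1 k
      (fun m h1 h2 => by rw [happ m (by omega), swapFun_low (by omega)])).trans hc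
  have inner2 : ∀ w : V,
      iterBr br w (fun m => a ((σ * τ) (m : Fin (n+1)))) (k + 2) j
        = iterBr br w (fun m => a (σ (m : Fin (n+1)))) 1 j := by
    intro w
    rw [iterBr_congr br w (f' := fun m => a (σ ((m - (k+1) : ℕ) : Fin (n+1)))) (k + 2) j
      (fun m h1 h2 => by rw [happ m (by omega), swapFun_mid (by omega) (by omega)])]
    have hc : iterBr br w
        (fun m => a (σ ((k + 1 + m - (k+1) : ℕ) : Fin (n+1)))) 1 j
        = iterBr br w (fun t => a (σ ((t - (k+1) : ℕ) : Fin (n+1)))) (k + 1 + 1) j :=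
      iterBr_shift br w (fun t => a (σ ((t - (k+1) : ℕ) : Fin (n+1)))) (k+1) 1 j
    rw [show k + 1 + 1 = k + 2 from by omega] at hc
    rw [← hc]
    exact iterBr_congr br w 1 j (fun m h1 h2 => by
      rw [show k + 1 + m - (k + 1) = m from by omega])
  have htail : ∀ w : V,
      iterBr br w (fun m => a ((σ * τ) (m : Fin (n+1)))) (k + j + 2) (n - (k + j + 1))
        = iterBr br w (fun m => a (σ (m : Fin (n+1)))) (j + k + 2) (n - (j + k + 1)) := by
    intro w
    rw [iterBr_congr br w (f' := fun m => a (σ (m : Fin (n+1)))) (k + j + 2) (n - (k + j + 1))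
      (fun m h1 h2 => by rw [happ m (by omega), swapFun_high (by omega)]),
      show k + j + 2 = j + k + 2 from by omega,
      show n - (k + j + 1) = n - (j + k + 1) from by omega]
  have hsign : ∑ m ∈ Finset.Icc 1 k, d ((σ * τ) (m : Fin (n+1)))
      = ∑ m ∈ Finset.Icc 1 k, d (σ ((j + 1 + m : ℕ) : Fin (n+1))) := by
    refine Finset.sum_congr rfl ?_
    intro m hm
    simp only [Finset.mem_Icc] at hm
    rw [happ m (by omega), swapFun_low (by omega)]
  rw [h0, hk1, inner1, inner2, htail, hsign]
  -- names for the pieces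
  set SX : ℤ := ∑ m ∈ Finset.Icc 1 j, d (σ (m : Fin (n+1))) with hSX
  set SY : ℤ := ∑ m ∈ Finset.Icc 1 k, d (σ ((j + 1 + m : ℕ) : Fin (n+1))) with hSY
  set BX : V := if d (σ 0) = 1 then δ (a (σ 0)) else 0 with hBX
  set BY : V := if d (σ ((j + 1 : ℕ) : Fin (n+1))) = 1
      then δ (a (σ ((j + 1 : ℕ) : Fin (n+1)))) else 0 with hBY
  set G : ℕ → V := fun m => a (σ (m : Fin (n+1))) with hG
  set X : V := iterBr br BX G 1 j with hX
  set Y : V := iterBr br BY G (j+2) k with hY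
  by_cases hs0 : d (σ 0) = 1
  · by_cases hs1 : d (σ ((j + 1 : ℕ) : Fin (n+1))) = 1
    · -- main case
      have hg : ∀ m : ℕ, G m ∈ H (d (σ (m : Fin (n+1)))) := fun m => ha _
      have hXmem : X ∈ H SX := by
        have hb : BX ∈ H (d (σ 0) - 1) := by
          rw [hBX, if_pos hs0]; exact hδ_mem (ha _)
        have := iterBr_mem H br hbr_mem BX G (fun m => d (σ (m : Fin (n+1)))) hg hb 1 j
        rwa [hs0, show (1:ℤ) - 1 + ∑ m ∈ Finset.Ico 1 (1 + j), d (σ (m : Fin (n+1)))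
            = SX from by
          rw [hSX, show 1 + j = j + 1 from by omega, Finset.Ico_add_one_right_eq_Icc]; ring] at this
      have hYmem : Y ∈ H SY := by
        have hb : BY ∈ H (d (σ ((j + 1 : ℕ) : Fin (n+1))) - 1) := by
          rw [hBY, if_pos hs1]; exact hδ_mem (ha _)
        have hsum : ∑ m ∈ Finset.Ico (j+2) (j + 2 + k), d (σ (m : Fin (n+1))) = SY := by
          rw [hSY, Finset.sum_Ico_eq_sum_range,
            show Finset.Icc 1 k = Finset.Ico 1 (k+1) from (Finset.Ico_add_one_right_eq_Icc 1 k).symm,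
            Finset.sum_Ico_eq_sum_range,
            show j + 2 + k - (j + 2) = k from by omega,
            show k + 1 - 1 = k from by omega]
          exact Finset.sum_congr rfl (fun i _ => by
            rw [show j + 2 + i = j + 1 + (1 + i) from by omega])
        have := iterBr_mem H br hbr_mem BY G (fun m => d (σ (m : Fin (n+1)))) hg hb (j+2) k
        rwa [hs1, hsum, show (1:ℤ) - 1 + SY = SY from by ring] at this
      rw [hanti hYmem hXmem, ← neg_smul, iterBr_smul, smul_smul]
      congr 1
      rw [koszulSgn_eq_zpow, koszulSgn_eq_zpow,
        show -((-1:ℚ) ^ (SY * SX)) = (-1:ℚ) ^ (SY * SX + 1) from by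
          rw [zpow_add₀ (by norm_num : (-1:ℚ) ≠ 0), zpow_one, mul_neg_one],
        mul_assoc, ← zpow_add₀ (by norm_num : (-1:ℚ) ≠ 0),
        ← zpow_add₀ (by norm_num : (-1:ℚ) ≠ 0),
        ← zpow_add₀ (by norm_num : (-1:ℚ) ≠ 0)]
      apply neg_one_zpow_congr
      have hAB : Fexp n (fun p => d (σ p)) τ = (d (σ ((j + 1 : ℕ) : Fin (n+1))) + SY)
          * (d (σ 0) + SX) := by
        rw [hτdef, Fexp_swap n (fun p => d (σ p)) j k h]
        congr 1
        · rw [Finset.range_eq_Ico, Finset.sum_eq_sum_Ico_succ_bot (by omega : 0 < k + 1),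
            Finset.Ico_add_one_right_eq_Icc, hSY]
        · rw [Finset.range_eq_Ico, Finset.sum_eq_sum_Ico_succ_bot (by omega : 0 < j + 1),
            Finset.Ico_add_one_right_eq_Icc, hSX, Nat.cast_zero]
      have hmul := Fexp_mul n d σ τ
      rw [hAB, hs0, hs1] at hmul
      have h2 : (2 : ZMod 2) = 0 := rfl
      push_cast at hmul ⊢
      rw [hmul]
      linear_combination (-(1 + (SY : ZMod 2) + (SX : ZMod 2) * (SY : ZMod 2))) * h2
    · -- second block has degree ≠ 1 : both sides vanish
      have hY0 : Y = 0 := by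
        rw [hY, hBY, if_neg hs1]; exact iterBr_zero br G (j+2) k
      rw [hY0]
      simp only [map_zero, LinearMap.zero_apply, iterBr_zero, smul_zero]
  · -- first block has degree ≠ 1 : both sides vanish
    have hX0 : X = 0 := by
      rw [hX, hBX, if_neg hs0]; exact iterBr_zero br G 1 j
    rw [hX0]
    simp only [map_zero, LinearMap.zero_apply, iterBr_zero, smul_zero]

/-- Getzler's Lemma 2, first part: `Z_{n,j,k} = Z_{n,k,j}` for `j + k < n`, in any
differential graded Lie algebra over `ℚ` with homogeneous elements
`a_0, …, a_n` of degrees `d_0, …, d_n`. -/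
theorem stmt_13 (V : Type*) [AddCommGroup V] [Module ℚ V]
    (H : ℤ → Submodule ℚ V)
    (br : V →ₗ[ℚ] V →ₗ[ℚ] V) (δ : V →ₗ[ℚ] V)
    (hbr_mem : ∀ {i j : ℤ} {a b : V}, a ∈ H i → b ∈ H j → br a b ∈ H (i + j))
    (hδ_mem : ∀ {i : ℤ} {a : V}, a ∈ H i → δ a ∈ H (i - 1))
    (hδδ : ∀ a : V, δ (δ a) = 0)
    (hanti : ∀ {i j : ℤ} {a b : V}, a ∈ H i → b ∈ H j →
      br a b = -((-1 : ℚ) ^ (i * j) • br b a))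
    (hjac : ∀ {i j : ℤ} {a b : V}, a ∈ H i → b ∈ H j → ∀ c : V,
      br a (br b c) = br (br a b) c + (-1 : ℚ) ^ (i * j) • br b (br a c))
    (hleib : ∀ {i : ℤ} {a : V}, a ∈ H i → ∀ b : V,
      δ (br a b) = br (δ a) b + (-1 : ℚ) ^ i • br a (δ b))
    (n : ℕ) (d : Fin (n + 1) → ℤ) (a : Fin (n + 1) → V)
    (ha : ∀ p, a p ∈ H (d p))
    (j k : ℕ) (hjk : j + k < n) :
    Zval br δ n d a j k = Zval br δ n d a k j := by
  have h : j + k + 1 ≤ n := by omega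
  unfold Zval
  refine Fintype.sum_equiv (Equiv.mulRight (swapPerm n j k h)) _ _ ?_
  intro σ
  simp only [Equiv.coe_mulRight]
  exact term_swap H br δ hbr_mem hδ_mem hanti n d a ha j k h σ

end
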